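/- Let F be a group, k ≥ 2, and suppose G is a group with surjection p : F → G such that the induced map F/F_k → G/G_k is an isomorphism (lower central series quotients). Then the induced map on relative second homology quotients (F_k ∩ [F₂, F₂])/[F_k, F₂] → (G_k ∩ [G₂, G₂])/[G_k, G₂] is an isomorphism, where F₂ = [F,F] and G₂ = [G,G], provided F₂ is a free group (so that Hopf's formula H₂(F₂/F_k) ≅ (F_k ∩ [F₂,F₂])/[F₂, F_k] applies) and G₂ is a free group. -/

import Mathlib

open scoped commutatorElement

lemma lcs_map_aux {F G : Type*} [Group F] [Group G] (p : F →* G) (hp : Function.Surjective p) :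
    ∀ n, ((⊤ : Subgroup F).lowerCentralSeries n).map p = (⊤ : Subgroup G).lowerCentralSeries n := by
  intro n
  induction n with
  | zero => exact Subgroup.map_top_of_surjective p hp
  | succ n ih =>
    have h1 : (⊤ : Subgroup F).lowerCentralSeries (n + 1) = ⁅(⊤ : Subgroup F).lowerCentralSeries n, (⊤ : Subgroup F)⁆ := rfl
    have h2 : (⊤ : Subgroup G).lowerCentralSeries (n + 1) = ⁅(⊤ : Subgroup G).lowerCentralSeries n, (⊤ : Subgroup G)⁆ := rfl
    rw [h1, h2, Subgroup.map_commutator, ih, Subgroup.map_top_of_surjective p hp]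

lemma core_aux {F G : Type*} [Group F] [Group G] (p : F →* G) (K : Subgroup F) [K.Normal]
    (φ : ↥K →* F) (hφK : ∀ n, φ n ∈ K) (hφp : ∀ n : ↥K, p (φ n) = p ↑n)
    (hφker : ∀ n : ↥K, p (↑n : F) = 1 → φ n = 1) :
    ∀ s ∈ ⁅K, K⁆, p s = 1 → s ∈ ⁅p.ker ⊓ K, K⁆ := by
  set S : Subgroup F := p.ker ⊓ K with hS
  set T : Subgroup F := ⁅S, K⁆ with hT
  haveI : T.Normal := Subgroup.commutator_normal S K
  have cm : ∀ a ∈ S, ∀ b ∈ K, Commute (QuotientGroup.mk a : F ⧸ T) (QuotientGroup.mk b) := by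
    intro a ha b hb
    rw [← commutatorElement_eq_one_iff_commute]
    have h : (QuotientGroup.mk ⁅a, b⁆ : F ⧸ T)
        = ⁅(QuotientGroup.mk a : F ⧸ T), QuotientGroup.mk b⁆ :=
      map_commutatorElement (QuotientGroup.mk' T) a b
    rw [← h, QuotientGroup.eq_one_iff]
    exact Subgroup.commutator_mem_commutator ha hb
  have hd : ∀ n : ↥K, (↑n : F) * (φ n)⁻¹ ∈ S := by
    intro n
    refine Subgroup.mem_inf.mpr ⟨?_, K.mul_mem n.2 (K.inv_mem (hφK n))⟩
    simp [MonoidHom.mem_ker, hφp n]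
  have key : ∀ n m : ↥K, (QuotientGroup.mk ((↑(n * m) : F) * (φ (n * m))⁻¹) : F ⧸ T)
      = QuotientGroup.mk ((↑n : F) * (φ n)⁻¹) * QuotientGroup.mk ((↑m : F) * (φ m)⁻¹) := by
    intro n m
    have hc : Commute (QuotientGroup.mk ((↑m : F) * (φ m)⁻¹) : F ⧸ T)
        ((QuotientGroup.mk (φ n : F) : F ⧸ T))⁻¹ :=
      (cm _ (hd m) _ (hφK n)).inv_right
    have e1 : (↑(n * m) : F) * (φ (n * m))⁻¹
        = (↑n : F) * ((↑m : F) * (φ m)⁻¹) * (φ n)⁻¹ := by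
      push_cast [map_mul]
      group
    rw [e1]
    have h2 : (QuotientGroup.mk ((↑n : F) * ((↑m : F) * (φ m)⁻¹) * (φ n)⁻¹) : F ⧸ T)
        = QuotientGroup.mk (↑n : F) * QuotientGroup.mk ((↑m : F) * (φ m)⁻¹)
          * (QuotientGroup.mk (φ n : F))⁻¹ := by
      simp [QuotientGroup.mk_mul, QuotientGroup.mk_inv]
    rw [h2, mul_assoc, hc.eq, ← mul_assoc]
    simp [QuotientGroup.mk_mul, QuotientGroup.mk_inv, mul_assoc]
  let γ : ↥K →* F ⧸ T := MonoidHom.mk' (fun n => QuotientGroup.mk ((↑n : F) * (φ n)⁻¹)) key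
  have hγcomm : commutator ↥K ≤ γ.ker := by
    rw [commutator, Subgroup.commutator_le]
    intro a _ b _
    rw [MonoidHom.mem_ker, map_commutatorElement]
    exact commutatorElement_eq_one_iff_commute.mpr (cm _ (hd a) _ (hd b).2)
  intro s hs hps
  have hmapK : Subgroup.map K.subtype (commutator ↥K) = ⁅K, K⁆ := by
    rw [commutator, Subgroup.map_commutator, ← MonoidHom.range_eq_map, K.range_subtype]
  rw [← hmapK] at hs
  obtain ⟨t, ht, hts⟩ := hs
  have hγt : γ t = 1 := hγcomm ht
  have hφt : φ t = 1 := hφker t (by rw [show ((t : F)) = s from hts]; exact hps)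
  have hms : (QuotientGroup.mk s : F ⧸ T) = 1 := by
    have : γ t = QuotientGroup.mk ((↑t : F) * (φ t)⁻¹) := rfl
    rw [this, hφt] at hγt
    simpa [show ((t : F)) = s from hts] using hγt
  exact (QuotientGroup.eq_one_iff s).mp hms

/-- Let `p : F → G` be a surjective homomorphism, `k ≥ 2` (so `F_k ≤ F₂ = [F,F]` and
`G_k ≤ G₂ = [G,G]`; here `F_k = (⊤ : Subgroup F).lowerCentralSeries (k-1)`), suppose the commutator
subgroups `F₂` and `G₂` are free, and suppose the induced map `F/F_k → G/G_k` is an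
isomorphism. Then the induced map
`(F_k ∩ [F₂,F₂])/[F_k,F₂] → (G_k ∩ [G₂,G₂])/[G_k,G₂]`
(which via Hopf's formula is `H₂(F₂/F_k) → H₂(G₂/G_k)`) is an isomorphism, stated
elementwise as injectivity and surjectivity of the induced map on cosets. -/
theorem stmt19 {F G : Type*} [Group F] [Group G] (p : F →* G)
    (hp : Function.Surjective p) (k : ℕ) (hk : 2 ≤ k)
    (hF2 : IsFreeGroup ↥(commutator F)) (hG2 : IsFreeGroup ↥(commutator G))
    (hle : (⊤ : Subgroup F).lowerCentralSeries (k - 1) ≤ ((⊤ : Subgroup G).lowerCentralSeries (k - 1)).comap p)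
    (hiso : Function.Bijective (QuotientGroup.map ((⊤ : Subgroup F).lowerCentralSeries (k - 1))
      ((⊤ : Subgroup G).lowerCentralSeries (k - 1)) p hle)) :
    (∀ x ∈ (⊤ : Subgroup F).lowerCentralSeries (k - 1) ⊓ ⁅commutator F, commutator F⁆,
      ∀ y ∈ (⊤ : Subgroup F).lowerCentralSeries (k - 1) ⊓ ⁅commutator F, commutator F⁆,
        (p x)⁻¹ * p y ∈ ⁅(⊤ : Subgroup G).lowerCentralSeries (k - 1), commutator G⁆ →
          x⁻¹ * y ∈ ⁅(⊤ : Subgroup F).lowerCentralSeries (k - 1), commutator F⁆) ∧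
    (∀ g ∈ (⊤ : Subgroup G).lowerCentralSeries (k - 1) ⊓ ⁅commutator G, commutator G⁆,
      ∃ x ∈ (⊤ : Subgroup F).lowerCentralSeries (k - 1) ⊓ ⁅commutator F, commutator F⁆,
        (p x)⁻¹ * g ∈ ⁅(⊤ : Subgroup G).lowerCentralSeries (k - 1), commutator G⁆) := by
  haveI := hG2
  set Fk := (⊤ : Subgroup F).lowerCentralSeries (k - 1) with hFk
  set Gk := (⊤ : Subgroup G).lowerCentralSeries (k - 1) with hGk
  -- basic facts
  have hmapc : Subgroup.map p (commutator F) = commutator G := by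
    have := lcs_map_aux p hp 1
    rw [Subgroup.top_lowerCentralSeries_one, Subgroup.top_lowerCentralSeries_one] at this; exact this
  have hmapk : Subgroup.map p Fk = Gk := lcs_map_aux p hp (k - 1)
  have hFkle : Fk ≤ commutator F := by
    have h1 : Fk ≤ (⊤ : Subgroup F).lowerCentralSeries 1 := (⊤ : Subgroup F).lowerCentralSeries_antitone (by omega)
    rw [Subgroup.top_lowerCentralSeries_one] at h1; exact h1
  -- preimage of Gk is Fk, via injectivity of hiso
  have hpre : ∀ a : F, p a ∈ Gk → a ∈ Fk := by
    intro a ha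
    have h1 : (QuotientGroup.map Fk Gk p hle) ((a : F ⧸ Fk)) = 1 := by
      rw [QuotientGroup.map_mk]
      exact (QuotientGroup.eq_one_iff (p a)).mpr ha
    have h2 : ((a : F ⧸ Fk)) = 1 := by
      apply hiso.1
      rw [h1, map_one]
    exact (QuotientGroup.eq_one_iff a).mp h2
  -- construct the section σ' : commutator G →* commutator F
  have hchoice : ∀ i : IsFreeGroup.Generators ↥(commutator G),
      ∃ a : F, a ∈ commutator F ∧ p a = ↑(IsFreeGroup.of i) := by
    intro i
    have : (↑(IsFreeGroup.of i : ↥(commutator G)) : G) ∈ Subgroup.map p (commutator F) := by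
      rw [hmapc]; exact (IsFreeGroup.of i : ↥(commutator G)).2
    obtain ⟨a, ha, hpa⟩ := this
    exact ⟨a, ha, hpa⟩
  let τ : IsFreeGroup.Generators ↥(commutator G) → ↥(commutator F) :=
    fun i => ⟨(hchoice i).choose, (hchoice i).choose_spec.1⟩
  let σ' : ↥(commutator G) →* ↥(commutator F) := IsFreeGroup.lift τ
  have hσ : ∀ y : ↥(commutator G), p ↑(σ' y) = ↑y := by
    have h := IsFreeGroup.ext_hom (G := ↥(commutator G))
      (f := p.comp ((commutator F).subtype.comp σ')) (g := (commutator G).subtype) ?_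
    · intro y
      exact DFunLike.congr_fun h y
    · intro i
      show p ↑(σ' (IsFreeGroup.of i)) = ↑(IsFreeGroup.of i)
      rw [show σ' (IsFreeGroup.of i) = τ i from IsFreeGroup.lift_of τ i]
      exact (hchoice i).choose_spec.2
  -- the map p' : commutator F →* commutator G
  let p' : ↥(commutator F) →* ↥(commutator G) :=
    (p.comp (commutator F).subtype).codRestrict (commutator G)
      (fun x => hmapc ▸ Subgroup.mem_map_of_mem p x.2)
  have hp' : ∀ x : ↥(commutator F), (↑(p' x) : G) = p ↑x := fun x => rfl
  let φ : ↥(commutator F) →* F := (commutator F).subtype.comp (σ'.comp p')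
  have hφeq : ∀ x : ↥(commutator F), φ x = ↑(σ' (p' x)) := fun x => rfl
  have hφK : ∀ x : ↥(commutator F), φ x ∈ commutator F := fun x => (σ' (p' x)).2
  have hφp : ∀ x : ↥(commutator F), p (φ x) = p ↑x := by
    intro x
    rw [hφeq, hσ, hp']
  have hφker : ∀ x : ↥(commutator F), p (↑x : F) = 1 → φ x = 1 := by
    intro x hx
    have : p' x = 1 := by
      apply Subtype.ext
      rw [hp', hx]
      rfl
    rw [hφeq, this, map_one]
    rfl
  have hcore := core_aux p (commutator F) φ hφK hφp hφker
  have hkerle : p.ker ⊓ commutator F ≤ Fk :=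
    fun a ha => hpre a (by
      have h1 : p a = 1 := MonoidHom.mem_ker.mp (Subgroup.mem_inf.mp ha).1
      rw [h1]; exact Gk.one_mem)
  constructor
  · -- injectivity
    intro x hx y hy hpz
    obtain ⟨hx1, hx2⟩ := Subgroup.mem_inf.mp hx
    obtain ⟨hy1, hy2⟩ := Subgroup.mem_inf.mp hy
    have hz1 : x⁻¹ * y ∈ Fk := Fk.mul_mem (Fk.inv_mem hx1) hy1
    have hz2 : x⁻¹ * y ∈ ⁅commutator F, commutator F⁆ :=
      Subgroup.mul_mem _ (Subgroup.inv_mem _ hx2) hy2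
    have hpz' : p (x⁻¹ * y) ∈ ⁅Gk, commutator G⁆ := by
      rw [map_mul, map_inv]; exact hpz
    have hGcomm : ⁅Gk, commutator G⁆ = Subgroup.map p ⁅Fk, commutator F⁆ := by
      rw [Subgroup.map_commutator, hmapk, hmapc]
    rw [hGcomm] at hpz'
    obtain ⟨w, hw, hpw⟩ := hpz'
    set s : F := w⁻¹ * (x⁻¹ * y) with hs
    have hsker : p s = 1 := by
      rw [hs, map_mul, map_inv, hpw]
      group
    have hsc : s ∈ ⁅commutator F, commutator F⁆ := by
      apply Subgroup.mul_mem _ (Subgroup.inv_mem _ _) hz2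
      exact Subgroup.commutator_mono hFkle le_rfl hw
    have hsT : s ∈ ⁅p.ker ⊓ commutator F, commutator F⁆ := hcore s hsc hsker
    have hsT' : s ∈ ⁅Fk, commutator F⁆ :=
      Subgroup.commutator_mono hkerle le_rfl hsT
    have : x⁻¹ * y = w * s := by rw [hs]; group
    rw [this]
    exact Subgroup.mul_mem _ hw hsT'
  · -- surjectivity
    intro g hg
    have hGcc : ⁅commutator G, commutator G⁆
        = Subgroup.map p ⁅commutator F, commutator F⁆ := by
      rw [Subgroup.map_commutator, hmapc]
    obtain ⟨hg1, hg2⟩ := Subgroup.mem_inf.mp hg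
    rw [hGcc] at hg2
    obtain ⟨x, hx, hpx⟩ := hg2
    refine ⟨x, Subgroup.mem_inf.mpr ⟨hpre x (by rw [hpx]; exact hg1), hx⟩, ?_⟩
    rw [hpx]
    simpa using Subgroup.one_mem _
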